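/- Let k ≥ 2, σ_i = i(k−i)/2, and let ξ : I → ℝ^k be a C¹ solution of system (P) on an interval I with ∑_{i=1}^k ξ_i(τ) = 0 for all τ ∈ I. Define b_i, b and B as below. Then B is nonincreasing on I and b is nondecreasing on I (so B and −b are Lyapunov functionals for (P)). Moreover, if ξ is not identically zero on I, then B − b is strictly decreasing on I. -/

import Mathlib

/-- `σᵢ = i(k-i)/2` (so that `σ₀ = σ_k = 0`). -/
noncomputable def sig (k i : ℕ) : ℝ := (i : ℝ) * ((k : ℝ) - (i : ℝ)) / 2

/-- System (P): for `i = 1,…,k`,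
`ξᵢ' = σᵢ₋₁(e^{-(ξᵢ-ξᵢ₋₁)} - 1) - σᵢ(e^{-(ξᵢ₊₁-ξᵢ)} - 1)` on the set `S`
(the conventions for `i = 1` and `i = k` are automatic since `σ₀ = σ_k = 0`). -/
def SolvesP (k : ℕ) (ξ : ℕ → ℝ → ℝ) (S : Set ℝ) : Prop :=
  ∀ i, 1 ≤ i → i ≤ k → ∀ τ ∈ S, HasDerivAt (ξ i)
    (sig k (i - 1) * (Real.exp (-(ξ i τ - ξ (i - 1) τ)) - 1)
      - sig k i * (Real.exp (-(ξ (i + 1) τ - ξ i τ)) - 1)) τ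

open Set Filter Real Topology

lemma abs_exp_sub_one_le' (x : ℝ) : |Real.exp x - 1| ≤ |x| * Real.exp |x| := by
  rcases le_or_gt 0 x with h | h
  · rw [abs_of_nonneg h, abs_of_nonneg (sub_nonneg.2 (Real.one_le_exp h))]
    have h1 : 1 - x ≤ Real.exp (-x) := by linarith [Real.add_one_le_exp (-x)]
    have h2 : Real.exp (-x) * Real.exp x = 1 := by rw [← Real.exp_add]; simp
    nlinarith [Real.exp_pos x]
  · rw [abs_of_neg h, abs_of_nonpos (sub_nonpos.2 (Real.exp_le_one_iff.2 h.le))]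
    have h1 := Real.add_one_le_exp x
    have h2 : 1 ≤ Real.exp (-x) := Real.one_le_exp (by linarith)
    nlinarith

lemma sup'_antitoneOn {ι : Type*} (s : Finset ι) (hs : s.Nonempty) (I : Set ℝ)
    (hI : I.OrdConnected) (c d : ι → ℝ → ℝ)
    (hder : ∀ i ∈ s, ∀ τ ∈ I, HasDerivAt (c i) (d i τ) τ)
    (hmax : ∀ τ ∈ I, ∀ i ∈ s, (∀ j ∈ s, c j τ ≤ c i τ) → d i τ ≤ 0) :
    AntitoneOn (fun τ => s.sup' hs fun i => c i τ) I := by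
  intro τ1 h1 τ2 h2 h12
  set f : ℝ → ℝ := fun τ => s.sup' hs fun i => c i τ with hf
  have hIcc : Icc τ1 τ2 ⊆ I := hI.out h1 h2
  have hcont : ContinuousOn f (Icc τ1 τ2) := fun x hx =>
    (ContinuousAt.finset_sup'_apply hs fun i hi =>
      (hder i hi x (hIcc hx)).continuousAt).continuousWithinAt
  have key := le_gronwallBound_of_liminf_deriv_right_le (f := f) (f' := fun _ => (0:ℝ))
      (δ := f τ1) (K := 0) (ε := 0) (a := τ1) (b := τ2) hcont ?_ le_rfl
      (fun x hx => by simp)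
  · have := key τ2 (right_mem_Icc.2 h12)
    simpa [gronwallBound_K0] using this
  · intro x hx r hr
    have hxI : x ∈ I := hIcc (Ico_subset_Icc_self hx)
    have hev : ∀ j ∈ s, ∀ᶠ z in 𝓝[>] x, c j z < f x + r * (z - x) := by
      intro j hj
      have hjle : c j x ≤ f x := Finset.le_sup' (fun i => c i x) hj
      rcases lt_or_eq_of_le hjle with hjlt | hjeq
      · have hcj : ContinuousAt (c j) x := (hder j hj x hxI).continuousAt
        have h1 : ∀ᶠ z in 𝓝[>] x, c j z < f x :=
          eventually_nhdsWithin_of_eventually_nhds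
            (hcj.eventually_lt continuousAt_const hjlt)
        filter_upwards [h1, self_mem_nhdsWithin] with z hz hz'
        have hzx : (0:ℝ) < z - x := sub_pos.2 hz'
        have hr' : (0:ℝ) < r := hr
        nlinarith [mul_pos hr' hzx]
      · have hd0 : d j x ≤ 0 := hmax x hxI j hj (fun l hl => by
          rw [hjeq]; exact Finset.le_sup' (fun i => c i x) hl)
        have hslope := hasDerivAt_iff_tendsto_slope.1 (hder j hj x hxI)
        have h2 : ∀ᶠ z in 𝓝[>] x, slope (c j) x z < r :=
          (hslope.eventually_lt_const (lt_of_le_of_lt hd0 (show (0:ℝ) < r from hr))).filter_mono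
            (nhdsWithin_mono x (fun z hz => ne_of_gt hz))
        filter_upwards [h2, self_mem_nhdsWithin] with z hz hz'
        have hzx : (0:ℝ) < z - x := sub_pos.2 hz'
        rw [slope_def_field, div_lt_iff₀ hzx] at hz
        linarith
    have hall : ∀ᶠ z in 𝓝[>] x, (z - x)⁻¹ * (f z - f x) < r := by
      filter_upwards [(Filter.eventually_all_finset s).2 hev, self_mem_nhdsWithin]
        with z hz hz'
      have hzx : (0:ℝ) < z - x := sub_pos.2 hz'
      have hfz : f z < f x + r * (z - x) := (Finset.sup'_lt_iff hs).2 (fun i hi => hz i hi)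
      rw [inv_mul_eq_div, div_lt_iff₀ hzx]
      linarith
    exact hall.frequently

/-- for a solution of (P) on an interval `I` with zero center of mass,
`B = max bᵢ` is nonincreasing and `b = min bᵢ` is nondecreasing on `I`; moreover if `ξ`
is not identically zero on `I` then `B - b` is strictly decreasing on `I`. -/
theorem stmt5 (k : ℕ) (hk : 2 ≤ k) (I : Set ℝ) (hI : I.OrdConnected)
    (ξ : ℕ → ℝ → ℝ) (hξ : SolvesP k ξ I)
    (hsum : ∀ τ ∈ I, ∑ i ∈ Finset.Icc 1 k, ξ i τ = 0)
    (b : ℕ → ℝ → ℝ)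
    (hb : ∀ i τ, b i τ = if 2 ≤ i ∧ i ≤ k then
      sig k (i - 1) * (Real.exp (-(ξ i τ - ξ (i - 1) τ)) - 1) else 0)
    (bmin B : ℝ → ℝ)
    (hbmin : ∀ τ, bmin τ
      = (Finset.Icc 1 (k + 1)).inf' (Finset.nonempty_Icc.mpr (by omega)) (fun i => b i τ))
    (hB : ∀ τ, B τ
      = (Finset.Icc 1 (k + 1)).sup' (Finset.nonempty_Icc.mpr (by omega)) (fun i => b i τ)) :
    AntitoneOn B I ∧ MonotoneOn bmin I ∧
      ((¬ ∀ τ ∈ I, ∀ i, 1 ≤ i → i ≤ k → ξ i τ = 0) →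
        StrictAntiOn (fun τ => B τ - bmin τ) I) := by
  classical
  have hne : (Finset.Icc 1 (k + 1)).Nonempty := Finset.nonempty_Icc.mpr (by omega)
  have hBs : ∀ τ, B τ = (Finset.Icc 1 (k+1)).sup' hne (fun i => b i τ) := hB
  have hbmins : ∀ τ, bmin τ = (Finset.Icc 1 (k+1)).inf' hne (fun i => b i τ) := hbmin
  have hb0 : ∀ i τ, ¬(2 ≤ i ∧ i ≤ k) → b i τ = 0 := fun i τ h => by rw [hb, if_neg h]
  have hbdef : ∀ i τ, 2 ≤ i → i ≤ k →
      b i τ = sig k (i-1) * (Real.exp (-(ξ i τ - ξ (i-1) τ)) - 1) := fun i τ h2 hik => by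
    rw [hb, if_pos ⟨h2, hik⟩]
  have hsig0 : sig k 0 = 0 := by simp [sig]
  have hsigk : sig k k = 0 := by simp [sig]
  have hσpos : ∀ i, 2 ≤ i → i ≤ k → 0 < sig k (i-1) := by
    intro i h2 hik
    have ha : (1:ℝ) ≤ ((i-1 : ℕ):ℝ) := by exact_mod_cast (by omega : 1 ≤ i - 1)
    have hc : ((i-1:ℕ):ℝ) + 1 ≤ (k:ℝ) := by exact_mod_cast (by omega : (i-1) + 1 ≤ k)
    unfold sig; nlinarith
  have hξd : ∀ i, 1 ≤ i → i ≤ k → ∀ τ ∈ I, HasDerivAt (ξ i) (b i τ - b (i+1) τ) τ := by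
    intro i h1 h2 τ hτ
    have H := hξ i h1 h2 τ hτ
    have e1 : b i τ = sig k (i-1) * (Real.exp (-(ξ i τ - ξ (i-1) τ)) - 1) := by
      rcases Nat.lt_or_ge i 2 with hi | hi
      · have hi1 : i = 1 := by omega
        subst hi1
        rw [hb0 1 τ (by omega)]
        simp [hsig0]
      · exact hbdef i τ hi h2
    have e2 : b (i+1) τ = sig k i * (Real.exp (-(ξ (i+1) τ - ξ i τ)) - 1) := by
      rcases Nat.lt_or_ge i k with hi | hi
      · have := hbdef (i+1) τ (by omega) (by omega)
        simpa using this
      · have hik : i = k := by omega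
        rw [hik, hb0 (k+1) τ (by omega), hsigk]; ring
    rw [e1, e2]; exact H
  have hpos : ∀ i, 2 ≤ i → i ≤ k → ∀ τ, 0 < b i τ + sig k (i-1) := by
    intro i h2 hik τ
    rw [hbdef i τ h2 hik]
    have h := hσpos i h2 hik
    have he := Real.exp_pos (-(ξ i τ - ξ (i-1) τ))
    nlinarith
  have hbd : ∀ i, 2 ≤ i → i ≤ k → ∀ τ ∈ I, HasDerivAt (b i)
      ((b i τ + sig k (i-1)) * (b (i-1) τ + b (i+1) τ - 2 * b i τ)) τ := by
    intro i h2 hik τ hτ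
    have hdi := hξd i (by omega) hik τ hτ
    have hdi1 := hξd (i-1) (by omega) (by omega) τ hτ
    rw [show (i-1)+1 = i from by omega] at hdi1
    have hu : HasDerivAt (fun τ => -(ξ i τ - ξ (i-1) τ))
        (-((b i τ - b (i+1) τ) - (b (i-1) τ - b i τ))) τ := (hdi.sub hdi1).neg
    have hcomp := (hu.exp.sub_const 1).const_mul (sig k (i-1))
    have hcomp' : HasDerivAt (b i)
        (sig k (i-1) * (Real.exp (-(ξ i τ - ξ (i-1) τ)) *
          -((b i τ - b (i+1) τ) - (b (i-1) τ - b i τ)))) τ :=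
      HasDerivAt.congr_of_eventuallyEq hcomp
        (Filter.Eventually.of_forall (fun τ' => hbdef i τ' h2 hik))
    have hfac : sig k (i-1) * Real.exp (-(ξ i τ - ξ (i-1) τ)) = b i τ + sig k (i-1) := by
      rw [hbdef i τ h2 hik]; ring
    convert hcomp' using 1
    rw [← hfac]; ring
  set d : ℕ → ℝ → ℝ := fun i τ => if 2 ≤ i ∧ i ≤ k then
    (b i τ + sig k (i-1)) * (b (i-1) τ + b (i+1) τ - 2 * b i τ) else 0 with hd
  have hder : ∀ i ∈ Finset.Icc 1 (k+1), ∀ τ ∈ I, HasDerivAt (b i) (d i τ) τ := by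
    intro i _ τ hτ
    by_cases hc : 2 ≤ i ∧ i ≤ k
    · simp only [hd, if_pos hc]; exact hbd i hc.1 hc.2 τ hτ
    · simp only [hd, if_neg hc]
      exact HasDerivAt.congr_of_eventuallyEq (hasDerivAt_const τ (0:ℝ))
        (Filter.Eventually.of_forall (fun τ' => hb0 i τ' hc))
  have hBanti : AntitoneOn B I := by
    have H := sup'_antitoneOn (Finset.Icc 1 (k+1)) hne I hI b d hder
      (by
        intro τ hτ i hi hmaxi
        by_cases hc : 2 ≤ i ∧ i ≤ k
        · simp only [hd, if_pos hc]
          have l1 := hmaxi (i-1) (by rw [Finset.mem_Icc]; omega)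
          have l2 := hmaxi (i+1) (by rw [Finset.mem_Icc]; omega)
          have hp := hpos i hc.1 hc.2 τ
          nlinarith
        · simp only [hd, if_neg hc]; exact le_rfl)
    intro a ha a' ha' haa'
    rw [hBs, hBs]; exact H ha ha' haa'
  have hmono : MonotoneOn bmin I := by
    have H := sup'_antitoneOn (Finset.Icc 1 (k+1)) hne I hI (fun i τ => - b i τ)
      (fun i τ => - d i τ)
      (fun i hi τ hτ => (hder i hi τ hτ).neg)
      (by
        intro τ hτ i hi hmaxi
        by_cases hc : 2 ≤ i ∧ i ≤ k
        · simp only [hd, if_pos hc]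
          have l1 := hmaxi (i-1) (by rw [Finset.mem_Icc]; omega)
          have l2 := hmaxi (i+1) (by rw [Finset.mem_Icc]; omega)
          have hp := hpos i hc.1 hc.2 τ
          nlinarith
        · simp only [hd, if_neg hc, neg_zero]; exact le_rfl)
    have hswap : ∀ τ, bmin τ = - (Finset.Icc 1 (k+1)).sup' hne (fun i => - b i τ) := by
      intro τ
      rw [hbmins]
      have h1 : (Finset.Icc 1 (k+1)).sup' hne (fun i => - b i τ)
          ≤ - (Finset.Icc 1 (k+1)).inf' hne (fun i => b i τ) :=
        Finset.sup'_le _ _ fun j hj => neg_le_neg (Finset.inf'_le _ hj)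
      have h2 : ∀ j ∈ Finset.Icc 1 (k+1),
          - (Finset.Icc 1 (k+1)).sup' hne (fun i => - b i τ) ≤ b j τ := fun j hj => by
        have := Finset.le_sup' (fun i => - b i τ) hj
        linarith
      have h3 := Finset.le_inf' hne (fun i => b i τ)
        (a := - (Finset.Icc 1 (k+1)).sup' hne (fun i => - b i τ)) h2
      linarith
    intro a ha a' ha' haa'
    rw [hswap, hswap]
    have := H ha ha' haa'
    simp only at this
    linarith
  refine ⟨hBanti, hmono, ?_⟩
  intro hne' τ1 h1 τ2 h2 hlt
  by_contra hcon
  push_neg at hcon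
  have hB21 : B τ2 ≤ B τ1 := hBanti h1 h2 hlt.le
  have hm12 : bmin τ1 ≤ bmin τ2 := hmono h1 h2 hlt.le
  have hBeq : B τ2 = B τ1 := by linarith
  have hmeq : bmin τ2 = bmin τ1 := by linarith
  have hIcc12 : Icc τ1 τ2 ⊆ I := hI.out h1 h2
  have hBconst : ∀ τ ∈ Icc τ1 τ2, B τ = B τ1 := fun τ hτ =>
    le_antisymm (hBanti h1 (hIcc12 hτ) hτ.1) (by
      have := hBanti (hIcc12 hτ) h2 hτ.2; linarith)
  have hmconst : ∀ τ ∈ Icc τ1 τ2, bmin τ = bmin τ1 := fun τ hτ =>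
    le_antisymm (by have := hmono (hIcc12 hτ) h2 hτ.2; linarith)
      (hmono h1 (hIcc12 hτ) hτ.1)
  have h1mem : (1:ℕ) ∈ Finset.Icc 1 (k+1) := by rw [Finset.mem_Icc]; omega
  have hb1 : ∀ τ, b 1 τ = 0 := fun τ => hb0 1 τ (by omega)
  have hB0 : ∀ τ, 0 ≤ B τ := fun τ => by
    rw [hBs]
    have := Finset.le_sup' (fun i => b i τ) h1mem
    rw [hb1] at this; exact this
  have hm0 : ∀ τ, bmin τ ≤ 0 := fun τ => by
    rw [hbmins]
    have := Finset.inf'_le (fun i => b i τ) h1mem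
    rw [hb1] at this; exact this
  set τm := (τ1 + τ2)/2 with hτm
  have hτmI : τm ∈ Icc τ1 τ2 := by rw [Set.mem_Icc, hτm]; constructor <;> linarith
  have hτmI' : τm ∈ I := hIcc12 hτmI
  have hnbhd : Icc τ1 τ2 ∈ 𝓝 τm := Icc_mem_nhds (by rw [hτm]; linarith) (by rw [hτm]; linarith)
  have hMnotpos : ¬ 0 < B τ1 := by
    intro hM
    have hdesc : ∀ j, 1 ≤ j → j ≤ k+1 → b j τm ≠ B τ1 := by
      intro j
      induction j using Nat.strong_induction_on with
      | _ j ih =>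
        intro hj1 hjk1 hbj
        have hjne1 : j ≠ 1 := by
          intro h; subst h; rw [hb1] at hbj; exact absurd hbj.symm (ne_of_gt hM)
        have hjnek : j ≠ k+1 := by
          intro h; subst h; rw [hb0 (k+1) τm (by omega)] at hbj
          exact absurd hbj.symm (ne_of_gt hM)
        have hj2 : 2 ≤ j := by omega
        have hjk : j ≤ k := by omega
        have hloc : IsLocalMax (b j) τm := by
          filter_upwards [hnbhd] with τ hτ
          rw [hbj]
          calc b j τ ≤ B τ := by
                rw [hBs]; exact Finset.le_sup' (fun i => b i τ) (by rw [Finset.mem_Icc]; omega)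
            _ = B τ1 := hBconst τ hτ
        have hz := hloc.hasDerivAt_eq_zero (hbd j hj2 hjk τm hτmI')
        have hp := hpos j hj2 hjk τm
        have hsum2 : b (j-1) τm + b (j+1) τm - 2 * b j τm = 0 := by
          rcases mul_eq_zero.1 hz with h | h
          · exact absurd h (ne_of_gt hp)
          · exact h
        have hle1 : b (j-1) τm ≤ B τ1 := by
          rw [← hBconst τm hτmI, hBs]
          exact Finset.le_sup' (fun i => b i τm) (by rw [Finset.mem_Icc]; omega)
        have hle2 : b (j+1) τm ≤ B τ1 := by
          rw [← hBconst τm hτmI, hBs]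
          exact Finset.le_sup' (fun i => b i τm) (by rw [Finset.mem_Icc]; omega)
        have hstep : b (j-1) τm = B τ1 := by rw [hbj] at hsum2; linarith
        exact ih (j-1) (by omega) (by omega) (by omega) hstep
    obtain ⟨j, hjmem, hjeq⟩ := Finset.exists_mem_eq_sup' hne (fun i => b i τm)
    rw [Finset.mem_Icc] at hjmem
    refine hdesc j hjmem.1 hjmem.2 ?_
    have := hBconst τm hτmI
    rw [hBs] at this
    rw [hjeq] at this
    exact this
  have hmnotneg : ¬ bmin τ1 < 0 := by
    intro hM
    have hdesc : ∀ j, 1 ≤ j → j ≤ k+1 → b j τm ≠ bmin τ1 := by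
      intro j
      induction j using Nat.strong_induction_on with
      | _ j ih =>
        intro hj1 hjk1 hbj
        have hjne1 : j ≠ 1 := by
          intro h; subst h; rw [hb1] at hbj; exact absurd hbj.symm (ne_of_lt hM)
        have hjnek : j ≠ k+1 := by
          intro h; subst h; rw [hb0 (k+1) τm (by omega)] at hbj
          exact absurd hbj.symm (ne_of_lt hM)
        have hj2 : 2 ≤ j := by omega
        have hjk : j ≤ k := by omega
        have hloc : IsLocalMin (b j) τm := by
          filter_upwards [hnbhd] with τ hτ
          rw [hbj]
          calc bmin τ1 = bmin τ := (hmconst τ hτ).symm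
            _ ≤ b j τ := by
                rw [hbmins]; exact Finset.inf'_le (fun i => b i τ) (by rw [Finset.mem_Icc]; omega)
        have hz := hloc.hasDerivAt_eq_zero (hbd j hj2 hjk τm hτmI')
        have hp := hpos j hj2 hjk τm
        have hsum2 : b (j-1) τm + b (j+1) τm - 2 * b j τm = 0 := by
          rcases mul_eq_zero.1 hz with h | h
          · exact absurd h (ne_of_gt hp)
          · exact h
        have hle1 : bmin τ1 ≤ b (j-1) τm := by
          rw [← hmconst τm hτmI, hbmins]
          exact Finset.inf'_le (fun i => b i τm) (by rw [Finset.mem_Icc]; omega)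
        have hle2 : bmin τ1 ≤ b (j+1) τm := by
          rw [← hmconst τm hτmI, hbmins]
          exact Finset.inf'_le (fun i => b i τm) (by rw [Finset.mem_Icc]; omega)
        have hstep : b (j-1) τm = bmin τ1 := by rw [hbj] at hsum2; linarith
        exact ih (j-1) (by omega) (by omega) (by omega) hstep
    obtain ⟨j, hjmem, hjeq⟩ := Finset.exists_mem_eq_inf' hne (fun i => b i τm)
    rw [Finset.mem_Icc] at hjmem
    refine hdesc j hjmem.1 hjmem.2 ?_
    have := hmconst τm hτmI
    rw [hbmins] at this
    rw [hjeq] at this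
    exact this
  have hM0 : B τ1 = 0 := le_antisymm (not_lt.1 hMnotpos) (hB0 τ1)
  have hm0' : bmin τ1 = 0 := le_antisymm (hm0 τ1) (not_lt.1 hmnotneg)
  have hballz : ∀ τ, B τ = 0 → bmin τ = 0 → ∀ j ∈ Finset.Icc 1 (k+1), b j τ = 0 := by
    intro τ hBτ hmτ j hj
    have h1' : b j τ ≤ B τ := by rw [hBs]; exact Finset.le_sup' (fun i => b i τ) hj
    have h2' : bmin τ ≤ b j τ := by rw [hbmins]; exact Finset.inf'_le (fun i => b i τ) hj
    linarith
  have hxiz : ∀ τ ∈ I, (∀ j ∈ Finset.Icc 1 (k+1), b j τ = 0) →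
      ∀ i, 1 ≤ i → i ≤ k → ξ i τ = 0 := by
    intro τ hτ hbz
    have hchain : ∀ i, 1 ≤ i → i ≤ k → ξ i τ = ξ 1 τ := by
      intro i
      induction i with
      | zero => intro h _; exact absurd h (by omega)
      | succ n ih =>
        intro h1' h2'
        by_cases hn : n = 0
        · subst hn; rfl
        · have hn1 : 1 ≤ n := by omega
          have hbn := hbz (n+1) (by rw [Finset.mem_Icc]; omega)
          rw [hbdef (n+1) τ (by omega) h2'] at hbn
          have hσ := hσpos (n+1) (by omega) h2'
          simp only [Nat.add_sub_cancel] at hbn hσ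
          have hexp1 : Real.exp (-(ξ (n+1) τ - ξ n τ)) = 1 := by
            rcases mul_eq_zero.1 hbn with h | h
            · exact absurd h (ne_of_gt hσ)
            · linarith
          have h0 := (Real.exp_eq_one_iff _).1 hexp1
          have heq : ξ (n+1) τ = ξ n τ := by
            have : ξ (n+1) τ - ξ n τ = 0 := by linarith [neg_eq_zero.1 h0]
            linarith
          rw [heq]; exact ih hn1 (by omega)
    intro i hi1 hik
    rw [hchain i hi1 hik]
    have hs := hsum τ hτ
    have hsc : ∑ i ∈ Finset.Icc 1 k, ξ i τ = (k:ℝ) * ξ 1 τ := by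
      rw [Finset.sum_congr rfl (fun i hi => hchain i (Finset.mem_Icc.1 hi).1 (Finset.mem_Icc.1 hi).2)]
      rw [Finset.sum_const, Nat.card_Icc, Nat.add_sub_cancel, nsmul_eq_mul]
    rw [hsc] at hs
    have hk0 : (k:ℝ) ≠ 0 := Nat.cast_ne_zero.2 (by omega)
    exact (mul_eq_zero.1 hs).resolve_left hk0
  push_neg at hne'
  obtain ⟨τ0, hτ0I, i0, hi01, hi0k, hξne⟩ := hne'
  have hξIcc : ∀ τ ∈ Icc τ1 τ2, ∀ i, 1 ≤ i → i ≤ k → ξ i τ = 0 := fun τ hτ =>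
    hxiz τ (hIcc12 hτ)
      (hballz τ (by rw [hBconst τ hτ]; exact hM0) (by rw [hmconst τ hτ]; exact hm0'))
  rcases le_or_gt τ1 τ0 with hc1 | hc1
  · rcases le_or_gt τ0 τ2 with hc2 | hc2
    · exact hξne (hξIcc τ0 ⟨hc1, hc2⟩ i0 hi01 hi0k)
    · have hBτ0 : B τ0 = 0 := by
        have := hBanti h2 hτ0I hc2.le
        have hb0' := hB0 τ0
        rw [hBeq, hM0] at this
        linarith
      have hmτ0 : bmin τ0 = 0 := by
        have := hmono h2 hτ0I hc2.le
        have hm0'' := hm0 τ0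
        rw [hmeq, hm0'] at this
        linarith
      exact hξne (hxiz τ0 hτ0I (hballz τ0 hBτ0 hmτ0) i0 hi01 hi0k)
  · -- Gronwall backward: ξ vanishes at τ1, propagate to τ0 < τ1
    have hJI : Icc τ0 τ1 ⊆ I := hI.out hτ0I h1
    set g : ℝ → ℝ := fun τ => ∑ i ∈ Finset.Icc 1 k, (ξ i τ)^2 with hgdef
    set G : ℝ → ℝ := fun τ => ∑ i ∈ Finset.Icc 1 k, (2:ℝ) * ξ i τ * (b i τ - b (i+1) τ)
      with hGdef
    have hg0 : ∀ τ, 0 ≤ g τ := fun τ => Finset.sum_nonneg fun i _ => sq_nonneg _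
    have hgd : ∀ τ ∈ I, HasDerivAt g (G τ) τ := by
      intro τ hτ
      simp only [hgdef, hGdef]
      apply HasDerivAt.fun_sum
      intro i hi
      rw [Finset.mem_Icc] at hi
      have H := (hξd i hi.1 hi.2 τ hτ).fun_pow 2
      exact H.congr_deriv (by norm_num)
    have hξcont : ∀ i, 1 ≤ i → i ≤ k → ContinuousOn (ξ i) (Icc τ0 τ1) :=
      fun i h1' h2' x hx => ((hξd i h1' h2' x (hJI hx)).continuousAt).continuousWithinAt
    obtain ⟨R, hR⟩ := (isCompact_Icc (a := τ0) (b := τ1)).exists_bound_of_continuousOn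
      (f := fun τ => ∑ i ∈ Finset.Icc 1 k, |ξ i τ|)
      (continuousOn_finset_sum _ fun i hi =>
        ((hξcont i (Finset.mem_Icc.1 hi).1 (Finset.mem_Icc.1 hi).2).abs))
    have hRξ : ∀ τ ∈ Icc τ0 τ1, ∀ i, 1 ≤ i → i ≤ k → |ξ i τ| ≤ R := by
      intro τ hτ i h1' h2'
      have hs := hR τ hτ
      rw [Real.norm_eq_abs, abs_of_nonneg (Finset.sum_nonneg fun j _ => abs_nonneg _)] at hs
      calc |ξ i τ| ≤ ∑ j ∈ Finset.Icc 1 k, |ξ j τ| :=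
            Finset.single_le_sum (f := fun j => |ξ j τ|) (fun j _ => abs_nonneg _)
              (Finset.mem_Icc.2 ⟨h1', h2'⟩)
        _ ≤ R := hs
    set C : ℝ := (k:ℝ)^2 * Real.exp (2*R) with hCdef
    have hCpos : 0 < C := by
      rw [hCdef]
      have : (0:ℝ) < (k:ℝ) := by exact_mod_cast (by omega : 0 < k)
      positivity
    have hgsq : ∀ τ, ∀ i, 1 ≤ i → i ≤ k → (ξ i τ)^2 ≤ g τ := fun τ i h1' h2' =>
      Finset.single_le_sum (f := fun j => (ξ j τ)^2) (fun j _ => sq_nonneg _)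
        (Finset.mem_Icc.2 ⟨h1', h2'⟩)
    have habprod : ∀ τ, ∀ a a', 1 ≤ a → a ≤ k → 1 ≤ a' → a' ≤ k →
        |ξ a τ| * |ξ a' τ| ≤ g τ := by
      intro τ a a' ha1 ha2 ha1' ha2'
      have q1 := hgsq τ a ha1 ha2
      have q2 := hgsq τ a' ha1' ha2'
      nlinarith [sq_nonneg (|ξ a τ| - |ξ a' τ|), sq_abs (ξ a τ), sq_abs (ξ a' τ)]
    have hbb : ∀ τ ∈ Icc τ0 τ1, ∀ j, 2 ≤ j → j ≤ k →
        |b j τ| ≤ C * (|ξ (j-1) τ| + |ξ j τ|) := by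
      intro τ hτ j h2' hjk
      rw [hbdef j τ h2' hjk, abs_mul]
      have hσnn : 0 ≤ sig k (j-1) := (hσpos j h2' hjk).le
      rw [abs_of_nonneg hσnn]
      have hσle : sig k (j-1) ≤ (k:ℝ)^2 := by
        have c1 : ((j-1:ℕ):ℝ) ≤ (k:ℝ) := Nat.cast_le.2 (by omega)
        have c0 : (0:ℝ) ≤ ((j-1:ℕ):ℝ) := Nat.cast_nonneg _
        have c2 : (0:ℝ) ≤ (k:ℝ) := Nat.cast_nonneg _
        unfold sig
        nlinarith
      have hexp := abs_exp_sub_one_le' (-(ξ j τ - ξ (j-1) τ))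
      have habs : |(-(ξ j τ - ξ (j-1) τ))| ≤ |ξ (j-1) τ| + |ξ j τ| := by
        rw [abs_neg]
        calc |ξ j τ - ξ (j-1) τ| ≤ |ξ j τ| + |ξ (j-1) τ| := abs_sub _ _
          _ = |ξ (j-1) τ| + |ξ j τ| := by ring
      have hexple : Real.exp |(-(ξ j τ - ξ (j-1) τ))| ≤ Real.exp (2*R) := by
        apply Real.exp_le_exp.2
        have r1 := hRξ τ hτ (j-1) (by omega) (by omega)
        have r2 := hRξ τ hτ j (by omega) hjk
        linarith
      have he1 : |Real.exp (-(ξ j τ - ξ (j-1) τ)) - 1|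
          ≤ (|ξ (j-1) τ| + |ξ j τ|) * Real.exp (2*R) := by
        calc |Real.exp (-(ξ j τ - ξ (j-1) τ)) - 1|
            ≤ |(-(ξ j τ - ξ (j-1) τ))| * Real.exp |(-(ξ j τ - ξ (j-1) τ))| := hexp
          _ ≤ (|ξ (j-1) τ| + |ξ j τ|) * Real.exp (2*R) :=
              mul_le_mul habs hexple (Real.exp_pos _).le (by positivity)
      calc sig k (j-1) * |Real.exp (-(ξ j τ - ξ (j-1) τ)) - 1|
          ≤ (k:ℝ)^2 * ((|ξ (j-1) τ| + |ξ j τ|) * Real.exp (2*R)) :=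
            mul_le_mul hσle he1 (abs_nonneg _) (by positivity)
        _ = C * (|ξ (j-1) τ| + |ξ j τ|) := by rw [hCdef]; ring
    have hbprod : ∀ τ ∈ Icc τ0 τ1, ∀ i, 1 ≤ i → i ≤ k → ∀ l, 1 ≤ l → l ≤ k+1 →
        |ξ i τ| * |b l τ| ≤ 2 * C * g τ := by
      intro τ hτ i hi1 hik l hl1 hlk
      by_cases hc : 2 ≤ l ∧ l ≤ k
      · have h1' := hbb τ hτ l hc.1 hc.2
        have p1 := habprod τ i (l-1) hi1 hik (by omega) (by omega)
        have p2 := habprod τ i l hi1 hik (by omega) hc.2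
        calc |ξ i τ| * |b l τ| ≤ |ξ i τ| * (C * (|ξ (l-1) τ| + |ξ l τ|)) :=
              mul_le_mul_of_nonneg_left h1' (abs_nonneg _)
          _ = C * (|ξ i τ| * |ξ (l-1) τ|) + C * (|ξ i τ| * |ξ l τ|) := by ring
          _ ≤ C * g τ + C * g τ :=
              add_le_add (mul_le_mul_of_nonneg_left p1 hCpos.le)
                (mul_le_mul_of_nonneg_left p2 hCpos.le)
          _ = 2 * C * g τ := by ring
      · rw [hb0 l τ hc, abs_zero, mul_zero]
        have hg' := hg0 τ
        positivity
    have hGb : ∀ τ ∈ Icc τ0 τ1, |G τ| ≤ (8 * k * C) * g τ := by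
      intro τ hτ
      simp only [hGdef]
      calc |∑ i ∈ Finset.Icc 1 k, (2:ℝ) * ξ i τ * (b i τ - b (i+1) τ)|
          ≤ ∑ i ∈ Finset.Icc 1 k, |(2:ℝ) * ξ i τ * (b i τ - b (i+1) τ)| :=
            Finset.abs_sum_le_sum_abs _ _
        _ ≤ ∑ _i ∈ Finset.Icc 1 k, 8 * C * g τ := by
            apply Finset.sum_le_sum
            intro i hi
            rw [Finset.mem_Icc] at hi
            have p1 := hbprod τ hτ i hi.1 hi.2 i (by omega) (by omega)
            have p2 := hbprod τ hτ i hi.1 hi.2 (i+1) (by omega) (by omega)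
            have hd' := abs_sub (b i τ) (b (i+1) τ)
            have e : |(2:ℝ) * ξ i τ * (b i τ - b (i+1) τ)|
                ≤ 2 * (|ξ i τ| * |b i τ|) + 2 * (|ξ i τ| * |b (i+1) τ|) := by
              rw [abs_mul, abs_mul, abs_two]
              have h2' : (0:ℝ) ≤ 2 * |ξ i τ| := by positivity
              calc 2 * |ξ i τ| * |b i τ - b (i+1) τ|
                  ≤ 2 * |ξ i τ| * (|b i τ| + |b (i+1) τ|) :=
                    mul_le_mul_of_nonneg_left hd' h2'
                _ = 2 * (|ξ i τ| * |b i τ|) + 2 * (|ξ i τ| * |b (i+1) τ|) := by ring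
            calc |(2:ℝ) * ξ i τ * (b i τ - b (i+1) τ)|
                ≤ 2 * (|ξ i τ| * |b i τ|) + 2 * (|ξ i τ| * |b (i+1) τ|) := e
              _ ≤ 2 * (2 * C * g τ) + 2 * (2 * C * g τ) := by
                  exact add_le_add (by linarith) (by linarith)
              _ = 8 * C * g τ := by ring
        _ = (8 * k * C) * g τ := by
            rw [Finset.sum_const, Nat.card_Icc, Nat.add_sub_cancel, nsmul_eq_mul]
            ring
    have hgτ1 : g τ1 = 0 := by
      simp only [hgdef]
      apply Finset.sum_eq_zero
      intro i hi
      rw [Finset.mem_Icc] at hi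
      rw [hξIcc τ1 (left_mem_Icc.2 hlt.le) i hi.1 hi.2]
      ring
    have hmem : ∀ s ∈ Icc (0:ℝ) (τ1 - τ0), τ1 - s ∈ Icc τ0 τ1 := by
      intro s hs
      rw [Set.mem_Icc]
      rw [Set.mem_Icc] at hs
      constructor <;> linarith
    have hφd : ∀ s ∈ Icc (0:ℝ) (τ1 - τ0),
        HasDerivAt (fun s => g (τ1 - s)) (-G (τ1 - s)) s := by
      intro s hs
      have hin := hmem s hs
      have h1' : HasDerivAt (fun s : ℝ => τ1 - s) (-1) s := by
        simpa using (hasDerivAt_const s τ1).fun_sub (hasDerivAt_id s)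
      have hcomp := HasDerivAt.comp s (hgd (τ1 - s) (hJI hin)) h1'
      simpa [Function.comp, Function.comp_def] using hcomp
    have key := norm_le_gronwallBound_of_norm_deriv_right_le (E := ℝ)
      (f := fun s => g (τ1 - s)) (f' := fun s => -G (τ1 - s)) (δ := 0)
      (K := 8*k*C) (ε := 0) (a := 0) (b := τ1 - τ0)
      (fun s hs => (hφd s hs).continuousAt.continuousWithinAt)
      (fun s hs => (hφd s (Ico_subset_Icc_self hs)).hasDerivWithinAt)
      (by simp [hgτ1])
      (by
        intro s hs
        have hin := hmem s (Ico_subset_Icc_self hs)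
        have hGb' := hGb (τ1 - s) hin
        rw [Real.norm_eq_abs, Real.norm_eq_abs, abs_neg, abs_of_nonneg (hg0 _), add_zero]
        exact hGb')
      (τ1 - τ0) (right_mem_Icc.2 (by linarith))
    rw [gronwallBound_ε0_δ0] at key
    have hgτ0 : g τ0 = 0 := by
      have key2 : |g τ0| ≤ 0 := by
        simp only [sub_sub_cancel, Real.norm_eq_abs] at key
        exact key
      have hle := le_abs_self (g τ0)
      have := hg0 τ0
      linarith
    have hsq0 : (ξ i0 τ0)^2 = 0 :=
      le_antisymm (by rw [← hgτ0]; exact hgsq τ0 i0 hi01 hi0k) (sq_nonneg _)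
    exact hξne (sq_eq_zero_iff.mp hsq0)
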